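/- One has ω · (algebraMap K R (ε(α)) - σ(α) · algebraMap K R (ε(1))) = 1; that is, the inverse of the unit ω is ε(α)·1 - ε(1)·σ(α). -/

import Mathlib

open Polynomial TensorProduct

noncomputable section

variable {K : Type*} [CommRing K]

/-- The quadratic `K`-algebra `K[X]/(X² - s·X + p)`. -/
abbrev Quad (s p : K) : Type _ := AdjoinRoot (X ^ 2 - C s * X + C p)

/-- The image of `X`, i.e. the generator `α`. -/
def qα (s p : K) : Quad s p := AdjoinRoot.root _

lemma quad_aeval_root (s p : K) :
    (aeval (qα s p)) (X ^ 2 - C s * X + C p) = 0 := by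
  simp [qα, AdjoinRoot.aeval_eq, AdjoinRoot.mk_self]

/-- The involution `σ` of the quadratic algebra, with `σ α = s - α`. -/
def qσ (s p : K) : Quad s p →ₐ[K] Quad s p :=
  AdjoinRoot.liftAlgHom _ (Algebra.ofId K (Quad s p)) (algebraMap K (Quad s p) s - qα s p) ((by
    have h := quad_aeval_root s p
    simp only [map_add, map_sub, map_mul, map_pow, aeval_X, aeval_C] at h ⊢
    linear_combination h) :
      aeval (algebraMap K (Quad s p) s - qα s p) (X ^ 2 - C s * X + C p) = 0)

lemma quad_repr (s p : K) (u : Quad s p) : ∃ A B : K,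
    u = algebraMap K _ A + algebraMap K _ B * qα s p := by
  rcases subsingleton_or_nontrivial K with hK | hK
  · haveI := Module.subsingleton K (Quad s p)
    exact ⟨0, 0, Subsingleton.elim _ _⟩
  have hm : (X ^ 2 - C s * X + C p).Monic := by monicity!
  have hdeg : (X ^ 2 - C s * X + C p).degree ≤ 2 := by compute_degree
  obtain ⟨q, rfl⟩ := AdjoinRoot.mk_surjective u
  set f : K[X] := X ^ 2 - C s * X + C p with hf
  refine ⟨(q %ₘ f).coeff 0, (q %ₘ f).coeff 1, ?_⟩
  have h1 : AdjoinRoot.mk f q = AdjoinRoot.mk f (q %ₘ f) := by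
    conv_lhs => rw [← modByMonic_add_div q f]
    simp [map_add, map_mul, AdjoinRoot.mk_self]
  have hlt : (q %ₘ f).degree < 2 := lt_of_lt_of_le (degree_modByMonic_lt q hm) hdeg
  have hle : (q %ₘ f).degree ≤ 1 := by
    cases hd : (q %ₘ f).degree with
    | bot => simp
    | coe n =>
      rw [hd] at hlt
      have hn : (n : WithBot ℕ) < 2 := hlt
      have h2 : n < 2 := by exact_mod_cast hn
      have hn1 : n ≤ 1 := by omega
      calc (n : WithBot ℕ) ≤ ((1:ℕ) : WithBot ℕ) := WithBot.coe_le_coe.mpr hn1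
        _ = 1 := by norm_cast
  have h2 := eq_X_add_C_of_degree_le_one hle
  rw [h1, h2]
  simp [qα, map_add, map_mul, AdjoinRoot.mk_C, AdjoinRoot.mk_X]
  ring

/-- The inverse of the twisting unit `ω` is `ε(α)·1 - ε(1)·σ(α)`. -/
theorem stmt3 (s p : K) (ω : (Quad s p)ˣ) (ε : Quad s p →ₗ[K] K)
    (hω : ε (ω : Quad s p) = 0) (hωα : ε ((ω : Quad s p) * qα s p) = 1) :
    (ω : Quad s p) *
      (algebraMap K (Quad s p) (ε (qα s p))
        - qσ s p (qα s p) * algebraMap K (Quad s p) (ε 1)) = 1 := by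
  obtain ⟨A, B, hu⟩ := quad_repr s p ((ω⁻¹ : (Quad s p)ˣ) : Quad s p)
  set α := qα s p with hαdef
  have hσ : qσ s p α = algebraMap K (Quad s p) s - α := by
    simp only [hαdef, qσ, qα, AdjoinRoot.liftAlgHom_root]
  have hsq : α ^ 2 = algebraMap K (Quad s p) s * α - algebraMap K (Quad s p) p := by
    have h := quad_aeval_root s p
    simp only [map_add, map_sub, map_mul, map_pow, aeval_X, aeval_C] at h
    linear_combination h
  have hinv : (ω : Quad s p) * (algebraMap K _ A + algebraMap K _ B * α) = 1 := by
    rw [← hu]; exact ω.mul_inv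
  have hB : ε 1 = B := by
    have h1 : (1 : Quad s p) = A • (ω : Quad s p) + B • ((ω : Quad s p) * α) := by
      rw [← hinv]; simp only [Algebra.smul_def]; ring
    rw [h1]; simp [hω, hωα]
  have hA : ε α = A + B * s := by
    have h2 : α = A • ((ω : Quad s p) * α) + (B * s) • ((ω : Quad s p) * α)
        - (B * p) • (ω : Quad s p) := by
      have h3 : ((ω : Quad s p) * (algebraMap K _ A + algebraMap K _ B * α)) * α
          = α := by rw [hinv, one_mul]
      simp only [Algebra.smul_def, map_mul]
      linear_combination -h3 + ((ω : Quad s p) * algebraMap K (Quad s p) B) * hsq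
    rw [h2]; simp [hω, hωα]
  rw [hσ, hA, hB]
  simp only [map_add, map_mul]
  linear_combination hinv

end
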